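/- Let ν be a compactly supported probability measure on [0, ∞) and c > 0, and set Z(1/u) = u + c ∫ t·u/(u − t) dν(t) for u ≠ 0 outside supp ν. If a ≤ b are both nonzero, both outside supp ν, and satisfy c ∫ t²/(a − t)² dν(t) ≤ 1 and c ∫ t²/(b − t)² dν(t) ≤ 1, then Z(1/a) ≤ Z(1/b). Moreover, if a ≠ b and both strict inequalities c ∫ t²/(a − t)² dν(t) < 1 and c ∫ t²/(b − t)² dν(t) < 1 hold, then Z(1/a) ≠ Z(1/b). -/

import Mathlib

open MeasureTheory

/-- The (topological) support of a measure on `ℝ`: points all of whose neighbourhoods have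
positive measure. -/
def msupport (ν : Measure ℝ) : Set ℝ := {x | ∀ U ∈ nhds x, 0 < ν U}

lemma msupport_compl_null (ν : Measure ℝ) : ν (msupport ν)ᶜ = 0 := by
  apply measure_null_of_locally_null
  intro x hx
  simp only [msupport, Set.mem_compl_iff, Set.mem_setOf_eq, not_forall] at hx
  obtain ⟨U, hU, hU0⟩ := hx
  exact ⟨U, nhdsWithin_le_nhds hU, by simpa using hU0⟩

lemma singleton_null (ν : Measure ℝ) {a : ℝ} (ha : a ∉ msupport ν) : ν {a} = 0 := by
  simp only [msupport, Set.mem_setOf_eq, not_forall] at ha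
  obtain ⟨U, hU, hU0⟩ := ha
  have h0 : ν U = 0 := by simpa using hU0
  exact le_antisymm (le_trans (measure_mono (by simpa using mem_of_mem_nhds hU)) h0.le) bot_le

lemma integ_aux (ν : Measure ℝ) [IsFiniteMeasure ν] {f : ℝ → ℝ} (hf : Measurable f)
    (hcont : ContinuousOn f (msupport ν)) (hcomp : IsCompact (msupport ν)) :
    Integrable f ν := by
  obtain ⟨C, hC⟩ := hcomp.exists_bound_of_continuousOn hcont
  refine ⟨hf.aestronglyMeasurable, HasFiniteIntegral.of_bounded (C := C) ?_⟩
  have hmem : ∀ᵐ t ∂ν, t ∈ msupport ν := by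
    rw [ae_iff]; exact msupport_compl_null ν
  filter_upwards [hmem] with t ht using hC t ht

lemma sub_ne_on (ν : Measure ℝ) {a : ℝ} (ha : a ∉ msupport ν) :
    ∀ t ∈ msupport ν, a - t ≠ 0 :=
  fun t ht h => ha (by rw [show a = t by linarith [sub_eq_zero.mp h]]; exact ht)

/-- Remarks `croissance globaleS` and (5.12): with
`Z(1/u) = u + c∫ t·u/(u−t) dν(t)`, if `a ≤ b` are nonzero, outside `supp ν` and satisfy
`c∫t²/(·−t)² dν ≤ 1`, then `Z(1/a) ≤ Z(1/b)`; and if `a ≠ b` with the strict inequalities,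
then `Z(1/a) ≠ Z(1/b)`. -/
theorem statement12 (ν : Measure ℝ) [IsProbabilityMeasure ν]
    (hcomp : IsCompact (msupport ν)) (hpos : msupport ν ⊆ Set.Ici (0 : ℝ))
    (c : ℝ) (hc : 0 < c)
    (a b : ℝ) (ha0 : a ≠ 0) (hb0 : b ≠ 0)
    (ha : a ∉ msupport ν) (hb : b ∉ msupport ν) :
    (a ≤ b → c * ∫ t, (t / (a - t)) ^ 2 ∂ν ≤ 1 → c * ∫ t, (t / (b - t)) ^ 2 ∂ν ≤ 1 →
      a + c * ∫ t, t * a / (a - t) ∂ν ≤ b + c * ∫ t, t * b / (b - t) ∂ν) ∧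
    (a ≠ b → c * ∫ t, (t / (a - t)) ^ 2 ∂ν < 1 → c * ∫ t, (t / (b - t)) ^ 2 ∂ν < 1 →
      a + c * ∫ t, t * a / (a - t) ∂ν ≠ b + c * ∫ t, t * b / (b - t) ∂ν) := by
  have hcontA : ContinuousOn (fun t : ℝ => a - t) (msupport ν) :=
    continuousOn_const.sub continuousOn_id
  have hcontB : ContinuousOn (fun t : ℝ => b - t) (msupport ν) :=
    continuousOn_const.sub continuousOn_id
  have hA := sub_ne_on ν ha
  have hB := sub_ne_on ν hb
  -- integrabilities
  have intfa : Integrable (fun t => t * a / (a - t)) ν :=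
    integ_aux ν ((measurable_id.mul_const a).div (measurable_const.sub measurable_id))
      (((continuousOn_id.mul continuousOn_const).div hcontA hA)) hcomp
  have intfb : Integrable (fun t => t * b / (b - t)) ν :=
    integ_aux ν ((measurable_id.mul_const b).div (measurable_const.sub measurable_id))
      (((continuousOn_id.mul continuousOn_const).div hcontB hB)) hcomp
  have intsa : Integrable (fun t => (t / (a - t)) ^ 2) ν :=
    integ_aux ν ((measurable_id.div (measurable_const.sub measurable_id)).pow_const 2)
      (((continuousOn_id.div hcontA hA)).pow 2) hcomp
  have intsb : Integrable (fun t => (t / (b - t)) ^ 2) ν :=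
    integ_aux ν ((measurable_id.div (measurable_const.sub measurable_id)).pow_const 2)
      (((continuousOn_id.div hcontB hB)).pow 2) hcomp
  have intp : Integrable (fun t => (t / (a - t)) * (t / (b - t))) ν :=
    integ_aux ν ((measurable_id.div (measurable_const.sub measurable_id)).mul
        (measurable_id.div (measurable_const.sub measurable_id)))
      ((continuousOn_id.div hcontA hA).mul (continuousOn_id.div hcontB hB)) hcomp
  -- a.e. facts
  have hta : ∀ᵐ t ∂ν, t ≠ a := by rw [ae_iff]; simpa using singleton_null ν ha
  have htb : ∀ᵐ t ∂ν, t ≠ b := by rw [ae_iff]; simpa using singleton_null ν hb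
  -- key identity
  have key : (∫ t, t * b / (b - t) ∂ν) = (∫ t, t * a / (a - t) ∂ν)
      + (a - b) * ∫ t, (t / (a - t)) * (t / (b - t)) ∂ν := by
    have h1 : (∫ t, t * b / (b - t) ∂ν) - (∫ t, t * a / (a - t) ∂ν)
        = ∫ t, (t * b / (b - t) - t * a / (a - t)) ∂ν := (integral_sub intfb intfa).symm
    have h2 : (∫ t, (t * b / (b - t) - t * a / (a - t)) ∂ν)
        = ∫ t, (a - b) * ((t / (a - t)) * (t / (b - t))) ∂ν := by
      refine integral_congr_ae ?_
      filter_upwards [hta, htb] with t h1 h2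
      have ha' : a - t ≠ 0 := sub_ne_zero.mpr (Ne.symm h1)
      have hb' : b - t ≠ 0 := sub_ne_zero.mpr (Ne.symm h2)
      field_simp
      ring
    rw [h2, integral_const_mul] at h1
    linarith
  -- pointwise AM-GM bound
  have hmono : (∫ t, (t / (a - t)) * (t / (b - t)) ∂ν)
      ≤ ∫ t, ((t / (a - t)) ^ 2 + (t / (b - t)) ^ 2) / 2 ∂ν := by
    refine integral_mono intp ((intsa.add intsb).div_const 2) fun t => ?_
    nlinarith [sq_nonneg (t / (a - t) - t / (b - t))]
  rw [integral_div, integral_add intsa intsb] at hmono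
  set A := ∫ t, (t / (a - t)) ^ 2 ∂ν
  set B := ∫ t, (t / (b - t)) ^ 2 ∂ν
  set I := ∫ t, (t / (a - t)) * (t / (b - t)) ∂ν
  constructor
  · intro hab h1 h2
    rw [key]
    nlinarith [mul_nonneg (sub_nonneg.2 hab) (sub_nonneg.2 (show c * I ≤ 1 by nlinarith))]
  · intro hne h1 h2 heq
    rw [key] at heq
    have hI : c * I < 1 := by nlinarith
    rcases hne.lt_or_gt with h | h
    · nlinarith
    · nlinarith
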